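/- (Corollary of Theorem 2.4.) Under the propagator setup and the solution setup with T = ∞, assume u₀ ≠ 0, let κ > 0, define ζ(t) := ‖U(t)‖·‖u₀‖ + ∫₀ᵗ ‖U(t)∘V(ξ)‖·β(ξ) dξ, and assume α(t)·((κ+1)·ζ(t))^p ≤ κ·β(t) for all t ≥ 0. If sup_{t≥0} ‖U(t)‖ < ∞ and sup_{t≥0} ∫₀ᵗ ‖U(t)∘V(ξ)‖·β(ξ) dξ < ∞, then sup_{t≥0} ‖u(t)‖ < ∞. If moreover ‖U(t)‖ → 0 and ∫₀ᵗ ‖U(t)∘V(ξ)‖·β(ξ) dξ → 0 as t → ∞, then u(t) → 0 as t → ∞. -/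

import Mathlib

open MeasureTheory Filter
open scoped ENNReal

set_option maxHeartbeats 1000000 in
theorem stmt10
    {X : Type*} [NormedAddCommGroup X] [NormedSpace ℝ X] [CompleteSpace X]
    (B U V : ℝ → X →L[ℝ] X)
    (hB : Continuous B)
    (hU0 : U 0 = 1) (hV0 : V 0 = 1)
    (hVU : ∀ t, 0 ≤ t → (V t).comp (U t) = 1)
    (hUV : ∀ t, 0 ≤ t → (U t).comp (V t) = 1)
    (hUd : ∀ t, 0 ≤ t → HasDerivAt U ((B t).comp (U t)) t)
    (hVd : ∀ t, 0 ≤ t → HasDerivAt V (-((V t).comp (B t))) t)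
    (p : ℝ) (hp : 1 < p)
    (α β : ℝ → ℝ) (hαc : Continuous α) (hβc : Continuous β)
    (hα0 : ∀ t, 0 ≤ α t) (hβ0 : ∀ t, 0 ≤ β t)
    (u G f : ℝ → X) (u₀ : X) (hu0 : u 0 = u₀)
    (hGc : ContinuousOn G (Set.Ici 0))
    (hfc : ContinuousOn f (Set.Ici 0))
    (hud : ∀ t, 0 ≤ t → HasDerivAt u (B t (u t) + G t + f t) t)
    (hGb : ∀ t, 0 ≤ t → ‖G t‖ ≤ α t * ‖u t‖ ^ p)
    (hfb : ∀ t, 0 ≤ t → ‖f t‖ ≤ β t)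
    (hu₀ : u₀ ≠ 0) (κ : ℝ) (hκ : 0 < κ)
    (ζ : ℝ → ℝ)
    (hζ : ∀ t, ζ t = ‖U t‖ * ‖u₀‖ + ∫ ξ in (0:ℝ)..t, ‖(U t).comp (V ξ)‖ * β ξ)
    (hκβ : ∀ t, 0 ≤ t → α t * ((κ + 1) * ζ t) ^ p ≤ κ * β t)
    (hUbd : ∃ C, ∀ t, 0 ≤ t → ‖U t‖ ≤ C)
    (hIbd : ∃ C, ∀ t, 0 ≤ t → ∫ ξ in (0:ℝ)..t, ‖(U t).comp (V ξ)‖ * β ξ ≤ C) :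
    (∃ C, ∀ t, 0 ≤ t → ‖u t‖ ≤ C) ∧
    (Tendsto (fun t => ‖U t‖) atTop (nhds 0) →
     Tendsto (fun t => ∫ ξ in (0:ℝ)..t, ‖(U t).comp (V ξ)‖ * β ξ) atTop (nhds 0) →
     Tendsto u atTop (nhds 0)) := by
  haveI : Nontrivial X := ⟨⟨u₀, 0, hu₀⟩⟩
  have hp0 : (0:ℝ) ≤ p := by linarith
  have hUc : ContinuousOn U (Set.Ici 0) := fun t ht => ((hUd t ht).continuousAt).continuousWithinAt
  have hVc : ContinuousOn V (Set.Ici 0) := fun t ht => ((hVd t ht).continuousAt).continuousWithinAt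
  have huc : ContinuousOn u (Set.Ici 0) := fun t ht => ((hud t ht).continuousAt).continuousWithinAt
  have hu₀n : 0 < ‖u₀‖ := norm_pos_iff.mpr hu₀
  have hUpos : ∀ t, 0 ≤ t → 0 < ‖U t‖ := by
    intro t ht
    rw [norm_pos_iff]
    intro h
    have h2 := hVU t ht
    rw [h, ContinuousLinearMap.comp_zero] at h2
    exact zero_ne_one h2
  have hVpos : ∀ t, 0 ≤ t → 0 < ‖V t‖ := by
    intro t ht
    rw [norm_pos_iff]
    intro h
    have h2 := hUV t ht
    rw [h, ContinuousLinearMap.comp_zero] at h2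
    exact zero_ne_one h2
  have hsub : ∀ a b : ℝ, 0 ≤ a → 0 ≤ b → Set.uIcc a b ⊆ Set.Ici 0 := by
    intro a b ha hb x hx
    exact le_trans (le_min ha hb) hx.1
  have hNc : ∀ t : ℝ, ContinuousOn (fun ξ => ‖(U t).comp (V ξ)‖) (Set.Ici 0) := by
    intro t
    have : ContinuousOn (fun ξ => (U t).comp (V ξ)) (Set.Ici 0) :=
      (ContinuousLinearMap.compL ℝ X X X (U t)).continuous.comp_continuousOn hVc
    exact this.norm
  have hupc : ContinuousOn (fun ξ => α ξ * ‖u ξ‖ ^ p) (Set.Ici 0) :=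
    hαc.continuousOn.mul ((huc.norm).rpow_const (fun x _ => Or.inr hp0))
  have hbigc : ∀ t : ℝ, ContinuousOn
      (fun ξ => ‖(U t).comp (V ξ)‖ * (α ξ * ‖u ξ‖ ^ p + β ξ)) (Set.Ici 0) :=
    fun t => (hNc t).mul (hupc.add hβc.continuousOn)
  have hNβc : ∀ t : ℝ, ContinuousOn (fun ξ => ‖(U t).comp (V ξ)‖ * β ξ) (Set.Ici 0) :=
    fun t => (hNc t).mul hβc.continuousOn
  have hNαc : ∀ t : ℝ, ContinuousOn (fun ξ => ‖(U t).comp (V ξ)‖ * (α ξ * ‖u ξ‖ ^ p)) (Set.Ici 0) :=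
    fun t => (hNc t).mul hupc
  have hII : ∀ (F : ℝ → ℝ), ContinuousOn F (Set.Ici 0) → ∀ a b : ℝ, 0 ≤ a → 0 ≤ b →
      IntervalIntegrable F volume a b :=
    fun F hF a b ha hb => (hF.mono (hsub a b ha hb)).intervalIntegrable
  have hGfc : ContinuousOn (fun ξ => V ξ (G ξ + f ξ)) (Set.Ici 0) :=
    hVc.clm_apply (hGc.add hfc)
  have hGfint : ∀ t, 0 ≤ t → IntervalIntegrable (fun ξ => V ξ (G ξ + f ξ)) volume 0 t :=
    fun t ht => (hGfc.mono (hsub 0 t le_rfl ht)).intervalIntegrable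
  -- Duhamel formula
  have hDuh : ∀ t, 0 ≤ t → u t = U t u₀ + ∫ ξ in (0:ℝ)..t, U t (V ξ (G ξ + f ξ)) := by
    intro t ht
    have hderiv : ∀ x ∈ Set.uIcc (0:ℝ) t, HasDerivAt (fun τ => V τ (u τ)) (V x (G x + f x)) x := by
      intro x hx
      have hx0 : (0:ℝ) ≤ x := hsub 0 t le_rfl ht hx
      have h1 := (hVd x hx0).clm_apply (hud x hx0)
      convert h1 using 1
      simp only [ContinuousLinearMap.neg_apply, ContinuousLinearMap.comp_apply, map_add]
      abel
    have hFTC := intervalIntegral.integral_eq_sub_of_hasDerivAt hderiv (hGfint t ht)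
    have hV0u : V 0 (u 0) = u₀ := by rw [hV0, hu0]; simp
    have hVtu : V t (u t) = u₀ + ∫ ξ in (0:ℝ)..t, V ξ (G ξ + f ξ) := by
      rw [hFTC]
      show V t (u t) = u₀ + (V t (u t) - V 0 (u 0))
      rw [hV0u]
      abel
    have hUVt : ∀ x : X, U t (V t x) = x := by
      intro x
      have h2 := hUV t ht
      calc U t (V t x) = ((U t).comp (V t)) x := rfl
        _ = x := by rw [h2]; simp
    calc u t = U t (V t (u t)) := (hUVt (u t)).symm
      _ = U t (u₀ + ∫ ξ in (0:ℝ)..t, V ξ (G ξ + f ξ)) := by rw [hVtu]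
      _ = U t u₀ + U t (∫ ξ in (0:ℝ)..t, V ξ (G ξ + f ξ)) := by rw [map_add]
      _ = U t u₀ + ∫ ξ in (0:ℝ)..t, U t (V ξ (G ξ + f ξ)) := by
            rw [ContinuousLinearMap.intervalIntegral_comp_comm _ (hGfint t ht)]
  -- Norm bound from Duhamel
  have hbound : ∀ t, 0 ≤ t → ‖u t‖ ≤ ‖U t‖ * ‖u₀‖ +
      ∫ ξ in (0:ℝ)..t, ‖(U t).comp (V ξ)‖ * (α ξ * ‖u ξ‖ ^ p + β ξ) := by
    intro t ht
    rw [hDuh t ht]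
    refine le_trans (norm_add_le _ _) (add_le_add ((U t).le_opNorm u₀) ?_)
    refine le_trans (intervalIntegral.norm_integral_le_integral_norm ht) ?_
    apply intervalIntegral.integral_mono_on ht
    · exact ((((U t).continuous.comp_continuousOn hGfc).norm).mono
        (hsub 0 t le_rfl ht)).intervalIntegrable
    · exact hII _ (hbigc t) 0 t le_rfl ht
    · intro x hx
      have hx0 : (0:ℝ) ≤ x := hx.1
      calc ‖U t (V x (G x + f x))‖ = ‖((U t).comp (V x)) (G x + f x)‖ := rfl
        _ ≤ ‖(U t).comp (V x)‖ * ‖G x + f x‖ := ContinuousLinearMap.le_opNorm _ _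
        _ ≤ ‖(U t).comp (V x)‖ * (α x * ‖u x‖ ^ p + β x) := by
            refine mul_le_mul_of_nonneg_left ?_ (norm_nonneg _)
            exact le_trans (norm_add_le _ _) (add_le_add (hGb x hx0) (hfb x hx0))
  -- key lemma (bound at s from pointwise bound on [0,s))
  have key : ∀ s, 0 ≤ s → (∀ ξ, 0 ≤ ξ → ξ < s → α ξ * ‖u ξ‖ ^ p ≤ κ * β ξ) →
      ‖u s‖ ≤ (κ + 1) * ζ s := by
    intro s hs hyp
    have h1 := hbound s hs
    have h2 : (∫ ξ in (0:ℝ)..s, ‖(U s).comp (V ξ)‖ * (α ξ * ‖u ξ‖ ^ p + β ξ)) ≤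
        ∫ ξ in (0:ℝ)..s, (κ + 1) * (‖(U s).comp (V ξ)‖ * β ξ) := by
      apply intervalIntegral.integral_mono_ae_restrict hs
        (hII _ (hbigc s) 0 s le_rfl hs)
        (hII _ (continuousOn_const.mul (hNβc s)) 0 s le_rfl hs)
      have hsing : (volume : Measure ℝ) {s} = 0 := measure_singleton s
      have hne' : ∀ᵐ ξ : ℝ, ξ ≠ s := by
        rw [ae_iff]
        convert hsing using 2
        ext x; simp
      have hne2 : ∀ᵐ ξ ∂(volume.restrict (Set.Icc (0:ℝ) s)), ξ ≠ s := ae_restrict_of_ae hne'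
      have hmem : ∀ᵐ ξ ∂(volume.restrict (Set.Icc (0:ℝ) s)), ξ ∈ Set.Icc (0:ℝ) s :=
        ae_restrict_mem measurableSet_Icc
      filter_upwards [hne2, hmem] with ξ hξne hξmem
      have hξ0 : (0:ℝ) ≤ ξ := hξmem.1
      have hξs : ξ < s := lt_of_le_of_ne hξmem.2 hξne
      have hb := hyp ξ hξ0 hξs
      have hN : (0:ℝ) ≤ ‖(U s).comp (V ξ)‖ := norm_nonneg _
      show ‖(U s).comp (V ξ)‖ * (α ξ * ‖u ξ‖ ^ p + β ξ) ≤ (κ + 1) * (‖(U s).comp (V ξ)‖ * β ξ)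
      nlinarith [mul_le_mul_of_nonneg_left hb hN]
    rw [intervalIntegral.integral_const_mul] at h2
    rw [hζ s]
    have hU0' : 0 ≤ ‖U s‖ * ‖u₀‖ := mul_nonneg (norm_nonneg _) (norm_nonneg _)
    nlinarith [h1, h2]
  have hpw_of_le : ∀ t, 0 ≤ t → ‖u t‖ ≤ (κ+1) * ζ t → α t * ‖u t‖ ^ p ≤ κ * β t := by
    intro t ht hle
    have h1 : ‖u t‖ ^ p ≤ ((κ+1) * ζ t) ^ p := Real.rpow_le_rpow (norm_nonneg _) hle hp0
    calc α t * ‖u t‖ ^ p ≤ α t * ((κ+1) * ζ t) ^ p := mul_le_mul_of_nonneg_left h1 (hα0 t)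
      _ ≤ κ * β t := hκβ t ht
  -- pointwise bound everywhere by bootstrap
  have pointwise : ∀ t, 0 ≤ t → α t * ‖u t‖ ^ p ≤ κ * β t := by
    by_contra hcon
    push_neg at hcon
    obtain ⟨t₀, ht₀, hbad₀⟩ := hcon
    set Bad : Set ℝ := {t | 0 ≤ t ∧ κ * β t < α t * ‖u t‖ ^ p} with hBadDef
    have hne : Bad.Nonempty := ⟨t₀, ⟨ht₀, hbad₀⟩⟩
    have hbdd : BddBelow Bad := ⟨0, fun x hx => hx.1⟩
    set s := sInf Bad with hsdef
    have hs0 : 0 ≤ s := le_csInf hne fun x hx => hx.1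
    have hbelow : ∀ ξ, 0 ≤ ξ → ξ < s → α ξ * ‖u ξ‖ ^ p ≤ κ * β ξ := by
      intro ξ hξ0 hξs
      by_contra hcc
      push_neg at hcc
      exact absurd (csInf_le hbdd ⟨hξ0, hcc⟩) (not_le.mpr hξs)
    have hus : ‖u s‖ ≤ (κ+1) * ζ s := key s hs0 hbelow
    have hps : α s * ‖u s‖ ^ p ≤ κ * β s := hpw_of_le s hs0 hus
    have hIcc : ∀ ξ ∈ Set.Icc (0:ℝ) s, α ξ * ‖u ξ‖ ^ p ≤ κ * β ξ := by
      intro ξ hξ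
      rcases eq_or_lt_of_le hξ.2 with h | h
      · rw [h]; exact hps
      · exact hbelow ξ hξ.1 h
    have hK : IsCompact (Set.Icc s (s+1)) := isCompact_Icc
    have hKsub : Set.Icc s (s+1) ⊆ Set.Ici 0 := fun x hx => le_trans hs0 hx.1
    obtain ⟨CU, hCU⟩ := hK.exists_bound_of_continuousOn (hUc.mono hKsub)
    obtain ⟨CV, hCV⟩ := hK.exists_bound_of_continuousOn (hVc.mono hKsub)
    obtain ⟨CM, hCM⟩ := hK.exists_bound_of_continuousOn (hupc.mono hKsub)
    have hsmem : s ∈ Set.Icc s (s+1) := ⟨le_rfl, by linarith⟩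
    have hCU0 : 0 < CU := lt_of_lt_of_le (hUpos s hs0) (hCU s hsmem)
    have hCV0 : 0 < CV := lt_of_lt_of_le (hVpos s hs0) (hCV s hsmem)
    have hCM0 : (0:ℝ) ≤ CM := le_trans (norm_nonneg _) (hCM s hsmem)
    have hca : ContinuousAt (fun τ => ‖U τ‖) s := ((hUd s hs0).continuousAt).norm
    have hUspos : 0 < ‖U s‖ := hUpos s hs0
    obtain ⟨δ₁, hδ₁pos, hδ₁⟩ := Metric.continuousAt_iff.mp hca (‖U s‖/2) (by linarith)
    set c : ℝ := ‖U s‖ / 2 with hcdef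
    have hcpos : 0 < c := by rw [hcdef]; linarith
    set K0 : ℝ := CU * CV * CM + 1 with hK0def
    have hK0pos : 0 < K0 := by positivity
    set δ : ℝ := min (δ₁/2) (min 1 (κ * c * ‖u₀‖ / K0)) with hδdef
    have hδpos : 0 < δ := by
      apply lt_min (by linarith)
      exact lt_min one_pos (by positivity)
    obtain ⟨b, hbBad, hblt⟩ := exists_lt_of_csInf_lt hne (by linarith : sInf Bad < s + δ)
    have hsb : s ≤ b := csInf_le hbdd hbBad
    have hb0 : 0 ≤ b := le_trans hs0 hsb
    have hδ1 : δ ≤ 1 := le_trans (min_le_right _ _) (min_le_left _ _)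
    have hb1 : b ≤ s + 1 := by linarith
    have hUb : c ≤ ‖U b‖ := by
      have hd : dist b s < δ₁ := by
        rw [Real.dist_eq, abs_of_nonneg (by linarith)]
        have h3 : δ ≤ δ₁/2 := min_le_left _ _
        linarith
      have h4 := hδ₁ hd
      rw [Real.dist_eq] at h4
      have h5 := abs_lt.mp h4
      rw [hcdef]
      linarith [h5.1]
    have hsplit : (∫ ξ in (0:ℝ)..b, ‖(U b).comp (V ξ)‖ * (α ξ * ‖u ξ‖ ^ p + β ξ)) =
        (∫ ξ in (0:ℝ)..b, ‖(U b).comp (V ξ)‖ * (α ξ * ‖u ξ‖ ^ p)) +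
        (∫ ξ in (0:ℝ)..b, ‖(U b).comp (V ξ)‖ * β ξ) := by
      rw [← intervalIntegral.integral_add (hII _ (hNαc b) 0 b le_rfl hb0)
        (hII _ (hNβc b) 0 b le_rfl hb0)]
      congr 1
      ext ξ
      ring
    have hsplit2 : (∫ ξ in (0:ℝ)..b, ‖(U b).comp (V ξ)‖ * (α ξ * ‖u ξ‖ ^ p)) =
        (∫ ξ in (0:ℝ)..s, ‖(U b).comp (V ξ)‖ * (α ξ * ‖u ξ‖ ^ p)) +
        (∫ ξ in s..b, ‖(U b).comp (V ξ)‖ * (α ξ * ‖u ξ‖ ^ p)) :=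
      (intervalIntegral.integral_add_adjacent_intervals
        (hII _ (hNαc b) 0 s le_rfl hs0) (hII _ (hNαc b) s b hs0 hb0)).symm
    have hest1 : (∫ ξ in (0:ℝ)..s, ‖(U b).comp (V ξ)‖ * (α ξ * ‖u ξ‖ ^ p)) ≤
        κ * ∫ ξ in (0:ℝ)..s, ‖(U b).comp (V ξ)‖ * β ξ := by
      rw [← intervalIntegral.integral_const_mul]
      apply intervalIntegral.integral_mono_on hs0 (hII _ (hNαc b) 0 s le_rfl hs0)
        (hII _ (continuousOn_const.mul (hNβc b)) 0 s le_rfl hs0)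
      intro ξ hξ
      have h := hIcc ξ hξ
      have hN : (0:ℝ) ≤ ‖(U b).comp (V ξ)‖ := norm_nonneg _
      calc ‖(U b).comp (V ξ)‖ * (α ξ * ‖u ξ‖ ^ p) ≤ ‖(U b).comp (V ξ)‖ * (κ * β ξ) :=
            mul_le_mul_of_nonneg_left h hN
        _ = κ * (‖(U b).comp (V ξ)‖ * β ξ) := by ring
    have hest2 : (∫ ξ in s..b, ‖(U b).comp (V ξ)‖ * (α ξ * ‖u ξ‖ ^ p)) ≤
        (b - s) * (CU*CV*CM) := by
      have hbK : b ∈ Set.Icc s (s+1) := ⟨hsb, hb1⟩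
      have hconst : ∀ ξ ∈ Set.Icc s b, ‖(U b).comp (V ξ)‖ * (α ξ * ‖u ξ‖ ^ p) ≤ CU*CV*CM := by
        intro ξ hξ
        have hξK : ξ ∈ Set.Icc s (s+1) := ⟨hξ.1, le_trans hξ.2 hb1⟩
        have h1 : ‖(U b).comp (V ξ)‖ ≤ CU * CV := by
          refine le_trans (ContinuousLinearMap.opNorm_comp_le _ _) ?_
          exact mul_le_mul (hCU b hbK) (hCV ξ hξK) (norm_nonneg _) (le_of_lt hCU0)
        have h2 : α ξ * ‖u ξ‖ ^ p ≤ CM := le_trans (le_abs_self _) (hCM ξ hξK)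
        have h2' : 0 ≤ α ξ * ‖u ξ‖ ^ p :=
          mul_nonneg (hα0 ξ) (Real.rpow_nonneg (norm_nonneg _) p)
        calc ‖(U b).comp (V ξ)‖ * (α ξ * ‖u ξ‖ ^ p) ≤ (CU*CV) * CM :=
              mul_le_mul h1 h2 h2' (by positivity)
          _ = CU*CV*CM := by ring
      calc (∫ ξ in s..b, ‖(U b).comp (V ξ)‖ * (α ξ * ‖u ξ‖ ^ p)) ≤ ∫ _ in s..b, CU*CV*CM :=
            intervalIntegral.integral_mono_on hsb (hII _ (hNαc b) s b hs0 hb0)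
              intervalIntegrable_const hconst
        _ = (b - s) * (CU*CV*CM) := by
            rw [intervalIntegral.integral_const, smul_eq_mul]
    have hest2' : (b - s) * (CU*CV*CM) ≤ κ * c * ‖u₀‖ := by
      have hδK : δ ≤ κ * c * ‖u₀‖ / K0 := le_trans (min_le_right _ _) (min_le_right _ _)
      have hbs : b - s ≤ δ := by linarith
      have h1 : (b-s) * (CU*CV*CM) ≤ δ * K0 := by
        apply mul_le_mul hbs (by rw [hK0def]; linarith) (by positivity) (le_of_lt hδpos)
      have h2 : δ * K0 ≤ κ * c * ‖u₀‖ := by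
        rw [← div_mul_cancel₀ (κ * c * ‖u₀‖) (ne_of_gt hK0pos)]
        exact mul_le_mul_of_nonneg_right hδK (le_of_lt hK0pos)
      linarith
    have hest3 : κ * (∫ ξ in (0:ℝ)..s, ‖(U b).comp (V ξ)‖ * β ξ) ≤
        κ * ∫ ξ in (0:ℝ)..b, ‖(U b).comp (V ξ)‖ * β ξ := by
      apply mul_le_mul_of_nonneg_left _ (le_of_lt hκ)
      have hadj := intervalIntegral.integral_add_adjacent_intervals
        (hII _ (hNβc b) 0 s le_rfl hs0) (hII _ (hNβc b) s b hs0 hb0)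
      have hnn : 0 ≤ ∫ ξ in s..b, ‖(U b).comp (V ξ)‖ * β ξ :=
        intervalIntegral.integral_nonneg hsb (fun ξ _ => mul_nonneg (norm_nonneg _) (hβ0 ξ))
      linarith
    have hub : ‖u b‖ ≤ (κ+1) * ζ b := by
      have h0 := hbound b hb0
      rw [hζ b]
      have hcub : κ * c * ‖u₀‖ ≤ κ * ‖U b‖ * ‖u₀‖ := by
        apply mul_le_mul_of_nonneg_right _ (norm_nonneg u₀)
        exact mul_le_mul_of_nonneg_left hUb (le_of_lt hκ)
      nlinarith [h0, hsplit, hsplit2, hest1, hest2, hest2', hest3, hcub]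
    have hfinal : α b * ‖u b‖ ^ p ≤ κ * β b := hpw_of_le b hb0 hub
    exact absurd hfinal (not_le.mpr hbBad.2)
  have main : ∀ t, 0 ≤ t → ‖u t‖ ≤ (κ+1) * ζ t :=
    fun t ht => key t ht (fun ξ hξ _ => pointwise ξ hξ)
  constructor
  · obtain ⟨C1, hC1⟩ := hUbd
    obtain ⟨C2, hC2⟩ := hIbd
    refine ⟨(κ+1) * (C1 * ‖u₀‖ + C2), fun t ht => ?_⟩
    have h1 := main t ht
    have h2 : ζ t ≤ C1 * ‖u₀‖ + C2 := by
      rw [hζ t]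
      exact add_le_add (mul_le_mul_of_nonneg_right (hC1 t ht) (norm_nonneg _)) (hC2 t ht)
    have h3 : (κ+1) * ζ t ≤ (κ+1) * (C1 * ‖u₀‖ + C2) :=
      mul_le_mul_of_nonneg_left h2 (by linarith)
    linarith
  · intro h1 h2
    have hζeq : ζ = fun t => ‖U t‖ * ‖u₀‖ + ∫ ξ in (0:ℝ)..t, ‖(U t).comp (V ξ)‖ * β ξ :=
      funext hζ
    have hζt : Tendsto ζ atTop (nhds 0) := by
      rw [hζeq]
      have h3 : Tendsto (fun t => ‖U t‖ * ‖u₀‖ + ∫ ξ in (0:ℝ)..t, ‖(U t).comp (V ξ)‖ * β ξ)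
          atTop (nhds (0 * ‖u₀‖ + 0)) := (h1.mul_const _).add h2
      simpa using h3
    rw [tendsto_zero_iff_norm_tendsto_zero]
    have hb2 : ∀ᶠ t in atTop, ‖u t‖ ≤ (κ+1) * ζ t := by
      filter_upwards [eventually_ge_atTop (0:ℝ)] with t ht using main t ht
    have ht2 : Tendsto (fun t => (κ+1) * ζ t) atTop (nhds 0) := by
      simpa using hζt.const_mul (κ+1)
    exact squeeze_zero' (Filter.Eventually.of_forall fun t => norm_nonneg _) hb2 ht2
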